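/- arXiv:2502.02140 — 3 statements merged into one kernel-verified Lean document; each statement's English description precedes it below -/
import Mathlib

section
/- Let $\mathcal{A}$ be a measurable space, $f, g : \mathcal{A} \to [0,\infty)$ integrable functions, and $\mathbb{Q}$ a probability measure on $\mathcal{A}$. Then there exist points $a_1, a_2 \in \mathcal{A}$ and $q \in [0,1]$ such that $q f(a_1) + (1-q) f(a_2) \le \int f \, d\mathbb{Q}$ and $q g(a_1) + (1-q) g(a_2) \le \int g \, d\mathbb{Q}$. -/
open MeasureTheory

/-- The set where an integrable function is at most its mean is not null. -/
lemma sublevel_not_null {A : Type*} [MeasurableSpace A]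
    (Q : Measure A) [IsProbabilityMeasure Q] (f : A → ℝ)
    (hf : Integrable f Q) : Q {a | f a ≤ ∫ x, f x ∂Q} ≠ 0 := by
  intro h0
  set F := ∫ x, f x ∂Q with hF
  have hlt : ∀ᵐ a ∂Q, F < f a := by
    rw [ae_iff]
    simpa [not_lt] using h0
  have hnn : 0 ≤ᵐ[Q] fun a => f a - F := hlt.mono fun a ha => by simp; linarith
  have hint : Integrable (fun a => f a - F) Q := hf.sub (integrable_const F)
  have hz : ∫ a, (f a - F) ∂Q = 0 := by
    rw [integral_sub hf (integrable_const F), integral_const]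
    simp [hF]
  have heq := (integral_eq_zero_iff_of_nonneg_ae hnn hint).mp hz
  have hfalse : ∀ᵐ a ∂Q, False := by
    filter_upwards [hlt, heq] with a ha1 ha2
    simp only [Pi.zero_apply] at ha2
    linarith
  rw [ae_iff] at hfalse
  simp at hfalse

/-- Proposition 1: simultaneous two-point compression. -/
theorem two_point_compression
    {A : Type*} [MeasurableSpace A] [Nonempty A]
    (Q : Measure A) [IsProbabilityMeasure Q]
    (f g : A → ℝ) (hf0 : ∀ a, 0 ≤ f a) (hg0 : ∀ a, 0 ≤ g a)
    (hf : Integrable f Q) (hg : Integrable g Q) :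
    ∃ a₁ a₂ : A, ∃ q : ℝ, 0 ≤ q ∧ q ≤ 1 ∧
      q * f a₁ + (1 - q) * f a₂ ≤ ∫ a, f a ∂Q ∧
      q * g a₁ + (1 - q) * g a₂ ≤ ∫ a, g a ∂Q := by
  set F := ∫ a, f a ∂Q with hF
  set G := ∫ a, g a ∂Q with hG
  by_cases h1 : ∃ a, f a ≤ F ∧ g a ≤ G
  · obtain ⟨a, ha1, ha2⟩ := h1
    exact ⟨a, a, 1, by norm_num, by norm_num, by simpa using ha1, by simpa using ha2⟩
  push_neg at h1
  -- h1 : ∀ a, f a ≤ F → G < g a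
  by_cases h2 : ∃ b, f b ≤ F ∧ ∃ c, g c ≤ G ∧
      (g b - G) * (f c - F) ≤ (g c - G) * (f b - F)
  · obtain ⟨b, hb, c, hc, hcross⟩ := h2
    have hyb : G < g b := h1 b hb
    have hden : 0 < g b - g c := by linarith
    refine ⟨b, c, -(g c - G) / (g b - g c), ?_, ?_, ?_, ?_⟩
    · apply div_nonneg (by linarith) (le_of_lt hden)
    · rw [div_le_one hden]; linarith
    · have key : -(g c - G) / (g b - g c) * (f b - F)
          + (1 - -(g c - G) / (g b - g c)) * (f c - F) ≤ 0 := by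
        have h1q : 1 - -(g c - G) / (g b - g c) = (g b - G) / (g b - g c) := by
          field_simp
          ring
        rw [h1q, div_mul_eq_mul_div, div_mul_eq_mul_div, ← add_div]
        apply div_nonpos_of_nonpos_of_nonneg _ (le_of_lt hden)
        nlinarith [hcross]
      nlinarith [key]
    · have key : -(g c - G) / (g b - g c) * g b
          + (1 - -(g c - G) / (g b - g c)) * g c = G := by
        field_simp
        ring
      linarith [key]
  push_neg at h2
  -- h2 : ∀ b, f b ≤ F → ∀ c, g c ≤ G → (g c - G) * (f b - F) < (g b - G) * (f c - F)
  exfalso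
  have hB : Q {a | f a ≤ F} ≠ 0 := by rw [hF]; exact sublevel_not_null Q f hf
  have hC : Q {a | g a ≤ G} ≠ 0 := by rw [hG]; exact sublevel_not_null Q g hg
  obtain ⟨b0, hb0⟩ := nonempty_of_measure_ne_zero hB
  simp only [Set.mem_setOf_eq] at hb0
  -- the set of slopes β(b)
  set S : Set ℝ := {t | ∃ b, f b ≤ F ∧ t = (g b - G) / (g b - G - (f b - F))} with hS
  have hSne : S.Nonempty := ⟨_, b0, hb0, rfl⟩
  have hSlb : ∀ t ∈ S, (0:ℝ) ≤ t := by
    rintro t ⟨b, hbB, rfl⟩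
    have hyb : G < g b := h1 b hbB
    apply div_nonneg (by linarith) (by linarith)
  have hbdd : BddBelow S := ⟨0, hSlb⟩
  set t0 : ℝ := sInf S with ht0
  have ht0nn : 0 ≤ t0 := le_csInf hSne hSlb
  have ht0le1 : t0 ≤ 1 := by
    apply csInf_le_of_le hbdd ⟨b0, hb0, rfl⟩
    have hyb : G < g b0 := h1 b0 hb0
    rw [div_le_one (by linarith)]
    linarith
  -- γ(c) ≤ t0 for all c with g c ≤ G
  have hgamma : ∀ c, g c ≤ G → -(g c - G) / (f c - F - (g c - G)) ≤ t0 := by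
    intro c hc
    apply le_csInf hSne
    rintro t ⟨b, hbB, rfl⟩
    have hyb : G < g b := h1 b hbB
    have hxc : F < f c := by
      by_contra h
      push_neg at h
      exact absurd hc (not_le.mpr (h1 c h))
    have hcr := h2 b hbB c hc
    rw [div_le_div_iff₀ (by linarith) (by linarith)]
    nlinarith [hcr]
  -- φ ≥ 0 everywhere
  set φ : A → ℝ := fun a => t0 * (f a - F) + (1 - t0) * (g a - G) with hφ
  have hφnn : ∀ a, 0 ≤ φ a := by
    intro a
    by_cases haB : f a ≤ F
    · have hyb : G < g a := h1 a haB
      have hle : t0 ≤ (g a - G) / (g a - G - (f a - F)) :=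
        csInf_le hbdd ⟨a, haB, rfl⟩
      rw [le_div_iff₀ (by linarith)] at hle
      simp only [hφ]
      nlinarith
    · push_neg at haB
      by_cases haC : g a ≤ G
      · have hle := hgamma a haC
        rw [div_le_iff₀ (by linarith)] at hle
        simp only [hφ]
        nlinarith
      · push_neg at haC
        simp only [hφ]
        nlinarith [mul_nonneg ht0nn (by linarith : (0:ℝ) ≤ f a - F),
          mul_nonneg (by linarith : (0:ℝ) ≤ 1 - t0) (by linarith : (0:ℝ) ≤ g a - G)]
  have hφint : Integrable φ Q :=
    ((hf.sub (integrable_const F)).const_mul t0).add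
      ((hg.sub (integrable_const G)).const_mul (1 - t0))
  have hint1 : Integrable (fun a => t0 * (f a - F)) Q :=
    (hf.sub (integrable_const F)).const_mul t0
  have hint2 : Integrable (fun a => (1 - t0) * (g a - G)) Q :=
    (hg.sub (integrable_const G)).const_mul (1 - t0)
  have hφ0 : ∫ a, φ a ∂Q = 0 := by
    simp only [hφ]
    rw [integral_add hint1 hint2,
      integral_const_mul, integral_const_mul,
      integral_sub hf (integrable_const F), integral_sub hg (integrable_const G),
      integral_const, integral_const]
    simp [hF, hG]
  have hae : φ =ᵐ[Q] 0 := (integral_eq_zero_iff_of_nonneg hφnn hφint).mp hφ0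
  have haez : Q {a | φ a ≠ 0} = 0 := by
    have := hae
    rw [Filter.EventuallyEq, ae_iff] at this
    simpa using this
  -- pick b in B with φ b = 0
  have hpick : ∀ s : Set A, Q s ≠ 0 → ∃ a ∈ s, φ a = 0 := by
    intro s hs
    have hle : Q s ≤ Q (s ∩ {a | φ a = 0}) + Q (s \ {a | φ a = 0}) :=
      measure_le_inter_add_diff Q s _
    have hdiff : Q (s \ {a | φ a = 0}) = 0 := by
      apply measure_mono_null _ haez
      intro a ha
      exact ha.2
    have : Q (s ∩ {a | φ a = 0}) ≠ 0 := by
      intro h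
      apply hs
      rw [h, hdiff, add_zero] at hle
      exact le_antisymm hle zero_le
    obtain ⟨a, ha⟩ := nonempty_of_measure_ne_zero this
    exact ⟨a, ha.1, ha.2⟩
  obtain ⟨b, hbB, hbZ⟩ := hpick _ hB
  obtain ⟨c, hcC, hcZ⟩ := hpick _ hC
  simp only [Set.mem_setOf_eq] at hbB hcC
  have hyb : G < g b := h1 b hbB
  have hxc : F < f c := by
    by_contra h
    push_neg at h
    exact absurd (Set.mem_setOf.mp hcC) (not_le.mpr (h1 c h))
  have hcr := h2 b hbB c hcC
  simp only [hφ] at hbZ hcZ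
  have h3 : t0 * ((g c - G) * (f b - F) - (g b - G) * (f c - F)) = 0 := by
    linear_combination (g c - G) * hbZ - (g b - G) * hcZ
  have ht00 : t0 = 0 := by
    rcases mul_eq_zero.mp h3 with h | h
    · exact h
    · nlinarith
  rw [ht00] at hbZ
  simp at hbZ
  linarith
end

section
/- Let $\mathcal{A}$ be a nonempty finite set, $f, g : \mathcal{A} \to [0,\infty)$, and $\mathbb{Q}$ a probability mass function on $\mathcal{A}$. Then there exist $a_1, a_2 \in \mathcal{A}$ and $q \in [0,1]$ with $q f(a_1) + (1-q) f(a_2) \le \sum_a f(a)\mathbb{Q}(a)$ and $q g(a_1) + (1-q) g(a_2) \le \sum_a g(a)\mathbb{Q}(a)$. -/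
/-- Finite version of Proposition 1 (Lemma 1 of Dong and Van Roy). -/
theorem two_point_compression_finite
    {A : Type*} [Fintype A] [Nonempty A]
    (Q : A → ℝ) (hQ0 : ∀ a, 0 ≤ Q a) (hQ1 : ∑ a, Q a = 1)
    (f g : A → ℝ) (hf0 : ∀ a, 0 ≤ f a) (hg0 : ∀ a, 0 ≤ g a) :
    ∃ a₁ a₂ : A, ∃ q : ℝ, 0 ≤ q ∧ q ≤ 1 ∧
      q * f a₁ + (1 - q) * f a₂ ≤ ∑ a, f a * Q a ∧
      q * g a₁ + (1 - q) * g a₂ ≤ ∑ a, g a * Q a := by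
  classical
  set F := ∑ a, f a * Q a with hF
  set G := ∑ a, g a * Q a with hG
  by_cases hA : ∃ a, f a ≤ F ∧ g a ≤ G
  · obtain ⟨a, h1, h2⟩ := hA
    exact ⟨a, a, 1, zero_le_one, le_refl 1, by simpa using h1, by simpa using h2⟩
  push_neg at hA
  -- hA : ∀ a, f a ≤ F → G < g a
  have husum : ∑ a, (f a - F) * Q a = 0 := by
    have : ∀ a ∈ Finset.univ, (f a - F) * Q a = f a * Q a - F * Q a :=
      fun a _ => by ring
    rw [Finset.sum_congr rfl this, Finset.sum_sub_distrib, ← Finset.mul_sum, hQ1,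
      mul_one, ← hF, sub_self]
  have hvsum : ∑ a, (g a - G) * Q a = 0 := by
    have : ∀ a ∈ Finset.univ, (g a - G) * Q a = g a * Q a - G * Q a :=
      fun a _ => by ring
    rw [Finset.sum_congr rfl this, Finset.sum_sub_distrib, ← Finset.mul_sum, hQ1,
      mul_one, ← hG, sub_self]
  have hsupp : ∃ a, 0 < Q a := by
    by_contra h; push_neg at h
    have hz : ∀ a, Q a = 0 := fun a => le_antisymm (h a) (hQ0 a)
    rw [Finset.sum_congr rfl (fun a _ => hz a)] at hQ1
    simp at hQ1
  have step1 : ∃ a, 0 < Q a ∧ f a ≤ F := by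
    by_contra h; push_neg at h
    have hnn : ∀ a ∈ Finset.univ, 0 ≤ (f a - F) * Q a := by
      intro a _
      rcases lt_or_eq_of_le (hQ0 a) with hq | hq
      · exact le_of_lt (mul_pos (sub_pos.2 (h a hq)) hq)
      · simp [← hq]
    have hz := (Finset.sum_eq_zero_iff_of_nonneg hnn).1 husum
    obtain ⟨a, ha⟩ := hsupp
    have h1 := hz a (Finset.mem_univ a)
    have h2 := mul_pos (sub_pos.2 (h a ha)) ha
    linarith
  obtain ⟨a₁, hQa₁, hfa₁⟩ := step1
  have hga₁ : G < g a₁ := hA a₁ hfa₁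
  have step3 : ∃ a, 0 < Q a ∧ g a < G := by
    by_contra h; push_neg at h
    have hnn : ∀ a ∈ Finset.univ, 0 ≤ (g a - G) * Q a := by
      intro a _
      rcases lt_or_eq_of_le (hQ0 a) with hq | hq
      · exact mul_nonneg (sub_nonneg.2 (h a hq)) (le_of_lt hq)
      · simp [← hq]
    have hz := (Finset.sum_eq_zero_iff_of_nonneg hnn).1 hvsum
    have h1 := hz a₁ (Finset.mem_univ a₁)
    have h2 := mul_pos (sub_pos.2 hga₁) hQa₁
    linarith
  have step4 : ∃ b₁ b₂ : A, G < g b₁ ∧ g b₂ < G ∧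
      (f b₂ - F) * (g b₁ - G) ≤ (f b₁ - F) * (g b₂ - G) := by
    by_contra hcon; push_neg at hcon
    -- hcon : ∀ b₁ b₂, G < g b₁ → g b₂ < G →
    --   (f b₁ - F) * (g b₂ - G) < (f b₂ - F) * (g b₁ - G)
    obtain ⟨a₂, hQa₂, hga₂⟩ := step3
    set L : Finset A := Finset.univ.filter (fun a => g a < G) with hL
    have hLne : L.Nonempty := ⟨a₂, by simp [hL, hga₂]⟩
    obtain ⟨b, hbL, hbmax⟩ := L.exists_max_image (fun a => (f a - F) / (g a - G)) hLne
    have hgb : g b < G := by simpa [hL] using hbL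
    set c := (f b - F) / (g b - G) with hc
    have hvb : g b - G < 0 := by linarith
    have hvb' : g b - G ≠ 0 := ne_of_lt hvb
    -- strict positivity for points above the line
    have hpos : ∀ a, G < g a → 0 < (f a - F) - c * (g a - G) := by
      intro a ha
      have hcab := hcon a b ha hgb
      have key : ((f a - F) - c * (g a - G)) * (g b - G)
          = (f a - F) * (g b - G) - (f b - F) * (g a - G) := by
        rw [hc]; field_simp
      have h1 : ((f a - F) - c * (g a - G)) * (g b - G) < 0 := by
        rw [key]; linarith
      by_contra hX
      push_neg at hX
      nlinarith
    have hnn : ∀ a ∈ Finset.univ, 0 ≤ ((f a - F) - c * (g a - G)) * Q a := by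
      intro a _
      apply mul_nonneg _ (hQ0 a)
      rcases lt_trichotomy (g a) G with hlt | heq | hgt
      · -- a ∈ L, slope maximality
        have haL : a ∈ L := by simp [hL, hlt]
        have hs := hbmax a haL
        have hva : g a - G < 0 := by linarith
        have hva' : g a - G ≠ 0 := ne_of_lt hva
        have : (f a - F) - c * (g a - G)
            = (g a - G) * ((f a - F) / (g a - G) - c) := by
          field_simp
        rw [this]
        nlinarith [hva, sub_nonpos.2 hs]
      · -- g a = G : then F < f a
        have hfa : F < f a := by
          by_contra hle; push_neg at hle
          have := hA a hle
          linarith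
        rw [heq]
        simp
        linarith
      · exact le_of_lt (hpos a hgt)
    have hsum0 : ∑ a, ((f a - F) - c * (g a - G)) * Q a = 0 := by
      have heq : ∀ a ∈ Finset.univ, ((f a - F) - c * (g a - G)) * Q a
          = (f a - F) * Q a - c * ((g a - G) * Q a) := fun a _ => by ring
      rw [Finset.sum_congr rfl heq, Finset.sum_sub_distrib, ← Finset.mul_sum,
        husum, hvsum, mul_zero, sub_self]
    have hz := (Finset.sum_eq_zero_iff_of_nonneg hnn).1 hsum0 a₁ (Finset.mem_univ a₁)
    have h2 := mul_pos (hpos a₁ hga₁) hQa₁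
    linarith
  obtain ⟨b₁, b₂, hb₁, hb₂, hcross⟩ := step4
  have hd : 0 < g b₁ - g b₂ := by linarith
  have hd' : g b₁ - g b₂ ≠ 0 := ne_of_gt hd
  refine ⟨b₁, b₂, (G - g b₂) / (g b₁ - g b₂), ?_, ?_, ?_, ?_⟩
  · exact div_nonneg (by linarith) (le_of_lt hd)
  · rw [div_le_one hd]; linarith
  · -- f part
    have heq : (G - g b₂) / (g b₁ - g b₂) * f b₁
        + (1 - (G - g b₂) / (g b₁ - g b₂)) * f b₂ - F
        = ((f b₂ - F) * (g b₁ - G) - (f b₁ - F) * (g b₂ - G)) / (g b₁ - g b₂) := by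
      field_simp; ring
    have hnum : (f b₂ - F) * (g b₁ - G) - (f b₁ - F) * (g b₂ - G) ≤ 0 := by linarith
    have := div_nonpos_of_nonpos_of_nonneg hnum (le_of_lt hd)
    linarith [heq ▸ this]
  · -- g part : equality
    have heq : (G - g b₂) / (g b₁ - g b₂) * g b₁
        + (1 - (G - g b₂) / (g b₁ - g b₂)) * g b₂ = G := by
      field_simp; ring
    exact le_of_eq heq
end

section
/- Let $\bar{F} = \int f \, d\mathbb{Q}$ and $\bar{G} = \int g \, d\mathbb{Q}$ for nonnegative integrable $f,g$ on a probability space $(\mathcal{A}, \mathbb{Q}$). Define $\mathcal{A}_f = \{a : f(a) \le \bar{F}\}$ and $\mathcal{A}_g = \{a : g(a) \le \bar{G}\}$. If $\mathcal{A}_f \cap \mathcal{A}_g = \emptyset$, then there exists a pair $(a_1, a_2) \in \mathcal{A}_f \times \mathcal{A}_g$ such that $f(a_2) g(a_1) - \bar{F}(g(a_1) - g(a_2)) \le \bar{G}(f(a_2) - f(a_1)) + f(a_1) g(a_2)$. -/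
open MeasureTheory

lemma aux_setIntegral_pos {A : Type*} [MeasurableSpace A] (Q : Measure A) (X : Set A)
    (h : A → ℝ) (hint : IntegrableOn h X Q)
    (hpos : ∀ᵐ x ∂Q.restrict X, 0 < h x) (hQX : Q X ≠ 0) :
    0 < ∫ x in X, h x ∂Q := by
  have hnn : 0 ≤ᵐ[Q.restrict X] h := hpos.mono fun x hx => hx.le
  rcases (integral_nonneg_of_ae hnn).eq_or_lt with heq | hlt
  · exfalso
    have hzero : h =ᵐ[Q.restrict X] 0 :=
      (integral_eq_zero_iff_of_nonneg_ae hnn hint).mp heq.symm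
    have hfalse : ∀ᵐ x ∂Q.restrict X, False := by
      filter_upwards [hpos, hzero] with x h1 h2
      simp [h2] at h1
    rw [Filter.eventually_false_iff_eq_bot, ae_eq_bot] at hfalse
    rw [← Measure.restrict_apply_univ] at hQX
    simp [hfalse] at hQX
  · exact hlt

/-- Key step in the proof of Proposition 1: if the sets of below-average points
of `f` and `g` are disjoint, some pair across them satisfies the product inequality. -/
theorem exists_pair_product_inequality
    {A : Type*} [MeasurableSpace A]
    (Q : Measure A) [IsProbabilityMeasure Q]
    (f g : A → ℝ) (hf0 : ∀ a, 0 ≤ f a) (hg0 : ∀ a, 0 ≤ g a)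
    (hf : Integrable f Q) (hg : Integrable g Q)
    (hdisj : {a | f a ≤ ∫ a, f a ∂Q} ∩ {a | g a ≤ ∫ a, g a ∂Q} = ∅) :
    ∃ a₁ ∈ {a | f a ≤ ∫ a, f a ∂Q}, ∃ a₂ ∈ {a | g a ≤ ∫ a, g a ∂Q},
      f a₂ * g a₁ - (∫ a, f a ∂Q) * (g a₁ - g a₂) ≤
        (∫ a, g a ∂Q) * (f a₂ - f a₁) + f a₁ * g a₂ := by
  by_contra hcon
  push_neg at hcon
  set F := ∫ a, f a ∂Q with hFdef
  set G := ∫ a, g a ∂Q with hGdef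
  set X : Set A := {a | f a ≤ F} with hXdef
  set Y : Set A := {a | g a ≤ G} with hYdef
  -- disjointness consequences
  have hXg : ∀ a ∈ X, G < g a := by
    intro a ha
    by_contra hle
    push_neg at hle
    have : a ∈ X ∩ Y := ⟨ha, hle⟩
    rw [hdisj] at this
    exact this
  have hYf : ∀ a ∈ Y, F < f a := by
    intro a ha
    by_contra hle
    push_neg at hle
    have : a ∈ X ∩ Y := ⟨hle, ha⟩
    rw [hdisj] at this
    exact this
  -- null measurability
  have hXnm : NullMeasurableSet X Q :=
    hf.aemeasurable.nullMeasurable measurableSet_Iic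
  have hYnm : NullMeasurableSet Y Q :=
    hg.aemeasurable.nullMeasurable measurableSet_Iic
  -- total integrals are zero
  have hfF : Integrable (fun a => f a - F) Q := hf.sub (integrable_const F)
  have hgG : Integrable (fun a => g a - G) Q := hg.sub (integrable_const G)
  have htotf : ∫ a, (f a - F) ∂Q = 0 := by
    rw [integral_sub hf (integrable_const F), integral_const]
    simp [hFdef]
  have htotg : ∫ a, (g a - G) ∂Q = 0 := by
    rw [integral_sub hg (integrable_const G), integral_const]
    simp [hGdef]
  -- positivity of the measures of X and Y
  have hQX : Q X ≠ 0 := by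
    intro h0
    have hae : ∀ᵐ a ∂Q, a ∉ X := measure_eq_zero_iff_ae_notMem.mp h0
    have hpos : ∀ᵐ a ∂Q.restrict Set.univ, 0 < f a - F := by
      rw [Measure.restrict_univ]
      filter_upwards [hae] with a ha
      have : ¬ f a ≤ F := ha
      linarith [lt_of_not_ge this]
    have := aux_setIntegral_pos Q Set.univ (fun a => f a - F)
      hfF.integrableOn hpos (by simp)
    rw [setIntegral_univ, htotf] at this
    exact lt_irrefl 0 this
  have hQY : Q Y ≠ 0 := by
    intro h0
    have hae : ∀ᵐ a ∂Q, a ∉ Y := measure_eq_zero_iff_ae_notMem.mp h0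
    have hpos : ∀ᵐ a ∂Q.restrict Set.univ, 0 < g a - G := by
      rw [Measure.restrict_univ]
      filter_upwards [hae] with a ha
      have : ¬ g a ≤ G := ha
      linarith [lt_of_not_ge this]
    have := aux_setIntegral_pos Q Set.univ (fun a => g a - G)
      hgG.integrableOn hpos (by simp)
    rw [setIntegral_univ, htotg] at this
    exact lt_irrefl 0 this
  -- the four key integrals
  set α : ℝ := ∫ a in X, (F - f a) ∂Q with hαdef
  set β' : ℝ := ∫ a in X, (g a - G) ∂Q with hβ'def
  set α' : ℝ := ∫ a in Y, (f a - F) ∂Q with hα'def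
  set β : ℝ := ∫ a in Y, (G - g a) ∂Q with hβdef
  have hFf : Integrable (fun a => F - f a) Q := (integrable_const F).sub hf
  have hGg : Integrable (fun a => G - g a) Q := (integrable_const G).sub hg
  have hα : 0 ≤ α := integral_nonneg_of_ae <| by
    filter_upwards [ae_restrict_mem₀ hXnm] with a ha
    have : f a ≤ F := ha
    simp only [Pi.zero_apply]
    linarith
  have hβ : 0 ≤ β := integral_nonneg_of_ae <| by
    filter_upwards [ae_restrict_mem₀ hYnm] with a ha
    have : g a ≤ G := ha
    simp only [Pi.zero_apply]
    linarith
  have hα' : 0 < α' := by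
    apply aux_setIntegral_pos Q Y _ hfF.integrableOn _ hQY
    filter_upwards [ae_restrict_mem₀ hYnm] with a ha
    linarith [hYf a ha]
  have hβ' : 0 < β' := by
    apply aux_setIntegral_pos Q X _ hgG.integrableOn _ hQX
    filter_upwards [ae_restrict_mem₀ hXnm] with a ha
    linarith [hXg a ha]
  -- α' ≤ α
  have hXneg : ∫ a in X, (f a - F) ∂Q = -α := by
    rw [hαdef, ← integral_neg]
    congr 1 with a
    ring
  have hcomplX : ∫ a in Xᶜ, (f a - F) ∂Q = α := by
    have := integral_add_compl₀ hXnm hfF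
    rw [htotf, hXneg] at this
    linarith
  have hαα' : α' ≤ α := by
    rw [← hcomplX, hα'def]
    apply setIntegral_mono_set hfF.integrableOn
    · filter_upwards [ae_restrict_mem₀ hXnm.compl] with a ha
      have : ¬ f a ≤ F := ha
      have := lt_of_not_ge this
      simp only [Pi.zero_apply]
      linarith
    · apply Filter.Eventually.of_forall
      intro a ha
      exact fun hx => absurd (hYf a ha) (not_lt.mpr hx)
  -- β' ≤ β
  have hYneg : ∫ a in Y, (g a - G) ∂Q = -β := by
    rw [hβdef, ← integral_neg]
    congr 1 with a
    ring
  have hcomplY : ∫ a in Yᶜ, (g a - G) ∂Q = β := by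
    have := integral_add_compl₀ hYnm hgG
    rw [htotg, hYneg] at this
    linarith
  have hββ' : β' ≤ β := by
    rw [← hcomplY, hβ'def]
    apply setIntegral_mono_set hgG.integrableOn
    · filter_upwards [ae_restrict_mem₀ hYnm.compl] with a ha
      have : ¬ g a ≤ G := ha
      have := lt_of_not_ge this
      simp only [Pi.zero_apply]
      linarith
    · apply Filter.Eventually.of_forall
      intro a ha
      exact fun hy => absurd (hXg a ha) (not_lt.mpr hy)
  -- key step 1 : for each a₂ ∈ Y, (G - g a₂) * α < (f a₂ - F) * β'
  have key1 : ∀ a₂ ∈ Y, (G - g a₂) * α < (f a₂ - F) * β' := by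
    intro a₂ ha₂
    have hint : Integrable (fun a => (f a₂ - F) * (g a - G) - (G - g a₂) * (F - f a)) Q :=
      (hgG.const_mul _).sub (hFf.const_mul _)
    have hposI : 0 < ∫ a in X, ((f a₂ - F) * (g a - G) - (G - g a₂) * (F - f a)) ∂Q := by
      apply aux_setIntegral_pos Q X _ hint.integrableOn _ hQX
      filter_upwards [ae_restrict_mem₀ hXnm] with a ha
      have h1 := hcon a ha a₂ ha₂
      nlinarith [h1]
    have hsplit : ∫ a in X, ((f a₂ - F) * (g a - G) - (G - g a₂) * (F - f a)) ∂Q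
        = (f a₂ - F) * β' - (G - g a₂) * α := by
      rw [integral_sub ((hgG.const_mul _).integrableOn) ((hFf.const_mul _).integrableOn),
        integral_const_mul, integral_const_mul]
    rw [hsplit] at hposI
    linarith
  -- key step 2 : integrate over Y
  have key2 : β * α < α' * β' := by
    have hint : Integrable (fun a₂ => (f a₂ - F) * β' - (G - g a₂) * α) Q :=
      (hfF.mul_const _).sub (hGg.mul_const _)
    have hposI : 0 < ∫ a₂ in Y, ((f a₂ - F) * β' - (G - g a₂) * α) ∂Q := by
      apply aux_setIntegral_pos Q Y _ hint.integrableOn _ hQY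
      filter_upwards [ae_restrict_mem₀ hYnm] with a ha
      linarith [key1 a ha]
    have hsplit : ∫ a₂ in Y, ((f a₂ - F) * β' - (G - g a₂) * α) ∂Q
        = α' * β' - β * α := by
      rw [integral_sub ((hfF.mul_const _).integrableOn) ((hGg.mul_const _).integrableOn),
        integral_mul_const, integral_mul_const]
    rw [hsplit] at hposI
    linarith
  nlinarith [mul_le_mul_of_nonneg_right hαα' hβ'.le, mul_le_mul_of_nonneg_left hββ' hα]
end
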